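/- (Proximal point method, strongly monotone case.) Let η ∈ ℝⁿ be a positive vector and let F : ℝⁿ → ℝⁿ be continuously differentiable with μ_{∞,η⁻¹}(−DF(x)) ≤ −c for all x ∈ ℝⁿ, where c > 0. Let x* be the unique zero of F, let α > 0, and let (x_k) be any sequence satisfying x_{k+1} + αF(x_{k+1}) = x_k for all k. Then ‖x_{k+1} − x*‖_{∞,η⁻¹} ≤ (1/(1 + αc)) ‖x_k − x*‖_{∞,η⁻¹} for all k; consequently x_k → x* as k → ∞. -/

import Mathlib

open Filter

/-- Diagonally weighted ℓ∞ norm: ‖x‖_{∞,η⁻¹} = max_i |x_i|/η_i. -/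
noncomputable def wNorm {n : ℕ} (η x : Fin n → ℝ) : ℝ := ⨆ i, |x i| / η i

/-- Diagonally weighted ℓ∞ logarithmic norm of a matrix. -/
noncomputable def logNorm {n : ℕ} (η : Fin n → ℝ) (A : Matrix (Fin n) (Fin n) ℝ) : ℝ :=
  ⨆ i, (A i i + ∑ j ∈ Finset.univ.erase i, (η j / η i) * |A i j|)

/-- Jacobian matrix of `F` at `x`: (DF(x))_{ij} = ∂F_i/∂x_j. -/
noncomputable def jac {n : ℕ} (F : (Fin n → ℝ) → (Fin n → ℝ)) (x : Fin n → ℝ) :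
    Matrix (Fin n) (Fin n) ℝ :=
  fun i j => fderiv ℝ F x (Pi.single j 1) i

section aux
variable {n : ℕ}

lemma le_wNorm (η x : Fin n → ℝ) (i : Fin n) : |x i| / η i ≤ wNorm η x := by
  exact le_ciSup (f := fun i => |x i| / η i) ((Set.finite_range _).bddAbove) i

lemma wNorm_nonneg' (η : Fin n → ℝ) (hη : ∀ i, 0 < η i) [Nonempty (Fin n)] (x : Fin n → ℝ) :
    0 ≤ wNorm η x := by
  obtain ⟨i⟩ := ‹Nonempty (Fin n)›
  refine le_trans ?_ (le_wNorm η x i)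
  exact div_nonneg (abs_nonneg _) (hη i).le

lemma abs_le_wNorm (η : Fin n → ℝ) (hη : ∀ i, 0 < η i) (x : Fin n → ℝ) (i : Fin n) :
    |x i| ≤ η i * wNorm η x := by
  have h := le_wNorm η x i
  rw [div_le_iff₀ (hη i)] at h
  linarith

lemma wNorm_eq (η x : Fin n → ℝ) [Nonempty (Fin n)] :
    ∃ i, wNorm η x = |x i| / η i := by
  obtain ⟨i, hi⟩ := exists_eq_ciSup_of_finite (f := fun i => |x i| / η i)
  exact ⟨i, hi.symm⟩

lemma fderiv_apply' (F : (Fin n → ℝ) → (Fin n → ℝ)) (x u : Fin n → ℝ) (i : Fin n) :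
    fderiv ℝ F x u i = ∑ j, u j * jac F x i j := by
  have hu : u = ∑ j, u j • (Pi.single j (1:ℝ) : Fin n → ℝ) := by
    funext k
    simp [Finset.sum_apply, Pi.single_apply]
  conv_lhs => rw [hu]
  rw [map_sum]
  simp [jac, Finset.sum_apply, map_smul]

lemma row_bound (η : Fin n → ℝ) (hη : ∀ i, 0 < η i) (A : Matrix (Fin n) (Fin n) ℝ)
    (c : ℝ) (h : logNorm η (-A) ≤ -c) (i : Fin n) :
    ∑ j ∈ Finset.univ.erase i, η j * |A i j| ≤ η i * (A i i - c) := by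
  have h1 : (-A) i i + ∑ j ∈ Finset.univ.erase i, (η j / η i) * |(-A) i j| ≤ -c :=
    le_trans (le_ciSup (f := fun i => (-A) i i + ∑ j ∈ Finset.univ.erase i, (η j / η i) * |(-A) i j|) ((Set.finite_range _).bddAbove) i) h
  simp only [Matrix.neg_apply, abs_neg] at h1
  have h2 : ∑ j ∈ Finset.univ.erase i, (η j / η i) * |A i j| ≤ A i i - c := by linarith
  have hi := hη i
  calc ∑ j ∈ Finset.univ.erase i, η j * |A i j|
      = η i * ∑ j ∈ Finset.univ.erase i, (η j / η i) * |A i j| := by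
        rw [Finset.mul_sum]
        refine Finset.sum_congr rfl fun j _ => ?_
        field_simp
    _ ≤ η i * (A i i - c) := by
        exact mul_le_mul_of_nonneg_left h2 hi.le

end aux

section core
variable {n : ℕ}

lemma deriv_row_bound (η : Fin n → ℝ) (hη : ∀ i, 0 < η i)
    (F : (Fin n → ℝ) → (Fin n → ℝ)) (c : ℝ)
    (hmono : ∀ x, logNorm η (-(jac F x)) ≤ -c)
    (u : Fin n → ℝ) (M : ℝ) (hM : 0 ≤ M)
    (i : Fin n) (hiabs : |u i| = η i * M) (hle : ∀ j, |u j| ≤ η j * M)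
    (ε : ℝ) (hε : ε * u i = |u i|) (hε1 : |ε| = 1) (w : Fin n → ℝ) :
    c * (η i * M) ≤ ε * (fderiv ℝ F w u i) := by
  set A := jac F w with hA
  have hrow := row_bound η hη A c (hmono w) i
  rw [fderiv_apply' F w u i, ← hA]
  have hsplit : ∑ j, u j * A i j
      = (∑ j ∈ Finset.univ.erase i, u j * A i j) + u i * A i i := by
    rw [Finset.sum_erase_add]
    exact Finset.mem_univ i
  rw [hsplit, mul_add]
  have h1 : ε * (u i * A i i) = |u i| * A i i := by
    rw [← hε]; ring
  have h2 : -(M * ∑ j ∈ Finset.univ.erase i, η j * |A i j|)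
      ≤ ε * ∑ j ∈ Finset.univ.erase i, u j * A i j := by
    have habs : |ε * ∑ j ∈ Finset.univ.erase i, u j * A i j|
        ≤ M * ∑ j ∈ Finset.univ.erase i, η j * |A i j| := by
      rw [abs_mul, hε1, one_mul]
      refine le_trans (Finset.abs_sum_le_sum_abs _ _) ?_
      rw [Finset.mul_sum]
      refine Finset.sum_le_sum fun j _ => ?_
      rw [abs_mul]
      calc |u j| * |A i j| ≤ (η j * M) * |A i j| :=
            mul_le_mul_of_nonneg_right (hle j) (abs_nonneg _)
        _ = M * (η j * |A i j|) := by ring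
    linarith [neg_abs_le (ε * ∑ j ∈ Finset.univ.erase i, u j * A i j)]
  rw [h1, hiabs]
  nlinarith [mul_le_mul_of_nonneg_left hrow hM]

lemma component_bound (η : Fin n → ℝ) (hη : ∀ i, 0 < η i)
    (F : (Fin n → ℝ) → (Fin n → ℝ)) (hF : ContDiff ℝ 1 F)
    (c : ℝ) (hmono : ∀ x, logNorm η (-(jac F x)) ≤ -c)
    (y z : Fin n → ℝ) (M : ℝ) (hM : 0 ≤ M)
    (i : Fin n) (hiabs : |(y - z) i| = η i * M) (hle : ∀ j, |(y - z) j| ≤ η j * M)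
    (ε : ℝ) (hε : ε * (y - z) i = |(y - z) i|) (hε1 : |ε| = 1) :
    c * (η i * M) ≤ ε * (F y i - F z i) := by
  set u := y - z with hu
  set m := c * (η i * M) with hm
  have hdiff := hF.differentiable one_ne_zero
  have hder : ∀ t : ℝ, HasDerivAt (fun t => ε * F (z + t • u) i)
      (ε * (fderiv ℝ F (z + t • u) u i)) t := by
    intro t
    have hp : HasDerivAt (fun t : ℝ => z + t • u) u t := by
      simpa using ((hasDerivAt_id t).smul_const u).const_add z
    have h1 := (hdiff (z + t • u)).hasFDerivAt.comp_hasDerivAt t hp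
    have h2 := ((ContinuousLinearMap.proj i :
      (Fin n → ℝ) →L[ℝ] ℝ).hasFDerivAt).comp_hasDerivAt t h1
    simpa using h2.const_mul ε
  have hgder : ∀ t : ℝ, HasDerivAt (fun t => ε * F (z + t • u) i - m * t)
      (ε * (fderiv ℝ F (z + t • u) u i) - m) t := by
    intro t
    exact (hder t).sub (by simpa using (hasDerivAt_id t).const_mul m)
  have mono : Monotone (fun t => ε * F (z + t • u) i - m * t) := by
    refine monotone_of_deriv_nonneg (fun t => (hgder t).differentiableAt) fun t => ?_
    rw [(hgder t).deriv]
    have := deriv_row_bound η hη F c hmono u M hM i hiabs hle ε hε hε1 (z + t • u)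
    linarith
  have h01 := mono (show (0:ℝ) ≤ 1 from zero_le_one)
  have hz0 : z + (0:ℝ) • u = z := by simp
  have hz1 : z + (1:ℝ) • u = y := by
    rw [one_smul, hu]; abel
  simp only [hz0, hz1, mul_zero, mul_one, sub_zero] at h01
  linarith [h01]

lemma contract (η : Fin n → ℝ) (hη : ∀ i, 0 < η i)
    (F : (Fin n → ℝ) → (Fin n → ℝ)) (hF : ContDiff ℝ 1 F)
    (c : ℝ) (hc : 0 < c) (hmono : ∀ x, logNorm η (-(jac F x)) ≤ -c)
    [Nonempty (Fin n)] (y z : Fin n → ℝ) (α : ℝ) (hα : 0 < α) :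
    (1 + α * c) * wNorm η (y - z) ≤ wNorm η (y - z + α • (F y - F z)) := by
  obtain ⟨i, hi⟩ := wNorm_eq η (y - z)
  set u := y - z with hu
  set M := wNorm η u with hM'
  have hM : 0 ≤ M := wNorm_nonneg' η hη u
  have hiabs : |u i| = η i * M := by
    rw [hi]
    rw [mul_div_assoc', mul_comm, mul_div_assoc, div_self (hη i).ne', mul_one]
  set ε : ℝ := if 0 ≤ u i then 1 else -1 with hε'
  have hε : ε * u i = |u i| := by
    rw [hε']; split_ifs with h
    · rw [one_mul, abs_of_nonneg h]
    · rw [abs_of_neg (not_le.mp h)]; ring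
  have hε1 : |ε| = 1 := by
    rw [hε']; split_ifs <;> simp
  have hcomp := component_bound η hη F hF c hmono y z M hM i hiabs
    (fun j => abs_le_wNorm η hη u j) ε hε hε1
  set v := u + α • (F y - F z) with hv
  have hvi : v i = u i + α * (F y i - F z i) := by
    rw [hv]; simp
  have key : (1 + α * c) * (η i * M) ≤ |v i| := by
    have h1 : ε * v i ≤ |v i| := by
      calc ε * v i ≤ |ε * v i| := le_abs_self _
        _ = |v i| := by rw [abs_mul, hε1, one_mul]
    have h2 : ε * v i = |u i| + α * (ε * (F y i - F z i)) := by
      rw [hvi, ← hε]; ring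
    rw [h2, hiabs] at h1
    nlinarith
  have h3 : |v i| ≤ η i * wNorm η v := abs_le_wNorm η hη v i
  have hηi := hη i
  have := le_trans key h3
  nlinarith

end core

/-- Proximal point method: strongly monotone case. -/
theorem stmt_9 {n : ℕ} (η : Fin n → ℝ) (hη : ∀ i, 0 < η i)
    (F : (Fin n → ℝ) → (Fin n → ℝ)) (hF : ContDiff ℝ 1 F)
    (c : ℝ) (hc : 0 < c) (hmono : ∀ x, logNorm η (-(jac F x)) ≤ -c)
    (xs : Fin n → ℝ) (hxs : F xs = 0)
    (α : ℝ) (hα : 0 < α)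
    (x : ℕ → (Fin n → ℝ)) (hx : ∀ k, x (k + 1) + α • F (x (k + 1)) = x k) :
    (∀ k, wNorm η (x (k + 1) - xs) ≤ (1 / (1 + α * c)) * wNorm η (x k - xs)) ∧
    Tendsto x atTop (nhds xs) := by
  rcases isEmpty_or_nonempty (Fin n) with hemp | hne
  · exfalso
    have h0 := hmono 0
    rw [logNorm, Real.iSup_of_isEmpty (ι := Fin n)] at h0
    linarith
  have hpos : 0 < 1 + α * c := by positivity
  have step : ∀ k, (1 + α * c) * wNorm η (x (k + 1) - xs) ≤ wNorm η (x k - xs) := by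
    intro k
    have h := contract η hη F hF c hc hmono (x (k + 1)) xs α hα
    have heq : x (k + 1) - xs + α • (F (x (k + 1)) - F xs) = x k - xs := by
      rw [hxs, sub_zero, ← hx k]
      abel
    rwa [heq] at h
  have hdiv : ∀ k, wNorm η (x (k + 1) - xs) ≤ (1 / (1 + α * c)) * wNorm η (x k - xs) := by
    intro k
    rw [div_mul_eq_mul_div, one_mul, le_div_iff₀ hpos, mul_comm]
    exact step k
  refine ⟨hdiv, ?_⟩
  set r : ℝ := 1 / (1 + α * c) with hr
  have hr0 : 0 ≤ r := by positivity
  have hr1 : r < 1 := by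
    rw [hr, div_lt_one hpos]
    nlinarith
  set C : ℝ := wNorm η (x 0 - xs) with hC
  have hbound : ∀ k, wNorm η (x k - xs) ≤ r ^ k * C := by
    intro k
    induction k with
    | zero => simp [hC]
    | succ k ih =>
      calc wNorm η (x (k + 1) - xs) ≤ r * wNorm η (x k - xs) := by
            have := hdiv k; linarith
        _ ≤ r * (r ^ k * C) := mul_le_mul_of_nonneg_left ih hr0
        _ = r ^ (k + 1) * C := by ring
  have htend0 : Tendsto (fun k => r ^ k * C) atTop (nhds 0) := by
    have := (tendsto_pow_atTop_nhds_zero_of_lt_one hr0 hr1).mul_const C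
    simpa using this
  rw [tendsto_pi_nhds]
  intro i
  have habs : ∀ k, |x k i - xs i| ≤ η i * (r ^ k * C) := by
    intro k
    calc |x k i - xs i| = |(x k - xs) i| := by simp
      _ ≤ η i * wNorm η (x k - xs) := abs_le_wNorm η hη _ i
      _ ≤ η i * (r ^ k * C) := mul_le_mul_of_nonneg_left (hbound k) (hη i).le
  have h1 : Tendsto (fun k => x k i - xs i) atTop (nhds 0) := by
    refine squeeze_zero_norm (fun k => ?_) (by simpa using htend0.const_mul (η i) :
      Tendsto (fun k => η i * (r ^ k * C)) atTop (nhds 0))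
    rw [Real.norm_eq_abs]
    exact habs k
  have := h1.add_const (xs i)
  simpa using this
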